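/- Let d₁, d₂ ≥ 1, r ∈ [0, d₂/2), α ≥ 0 with α + 2r > (d₁+2d₂)/2, and let ϱ₁(x,y) = |x'-y'| + |x''-y''|^{1/2} on ℝ^{d₁}×ℝ^{d₂}. Then there is a constant C (depending on d₁,d₂,α,r) such that for all y, ∫_{ℝ^{d₁}×ℝ^{d₂}} (1 + |x''-y''|/(1+|y'|))^{-2r} (1 + ϱ₁(x,y))^{-2α} dx ≤ C (1+|y'|)^{d₂}. -/
import Mathlib

open MeasureTheory Module Real

lemma aux_pointwise_bound (r α α' α'' t a b : ℝ) (hr0 : 0 ≤ r) (hα'0 : 0 ≤ α')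
    (hα''0 : 0 ≤ α'') (hsum : α = α' + α'') (ht : 1 ≤ t) (ha0 : 0 ≤ a) (hb0 : 0 ≤ b) :
    (1 + b / t) ^ (-(2 * r)) * (1 + (a + Real.sqrt b)) ^ (-(2 * α)) ≤
      (1 + a) ^ (-(2 * α')) * (1 + b / t) ^ (-(2 * r + α'')) := by
  have ht0 : (0 : ℝ) < t := by linarith
  have hbt0 : 0 ≤ b / t := by positivity
  have hsq0 : 0 ≤ Real.sqrt b := Real.sqrt_nonneg b
  have hB0 : (0 : ℝ) < 1 + (a + Real.sqrt b) := by linarith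
  have hsq : Real.sqrt (1 + b) ≤ 1 + Real.sqrt b := by
    rw [show (1 : ℝ) + Real.sqrt b = Real.sqrt ((1 + Real.sqrt b) ^ 2) from
      (Real.sqrt_sq (by linarith)).symm]
    apply Real.sqrt_le_sqrt
    nlinarith [Real.sq_sqrt hb0]
  have hsplit : (1 + (a + Real.sqrt b)) ^ (-(2 * α)) =
      (1 + (a + Real.sqrt b)) ^ (-(2 * α')) * (1 + (a + Real.sqrt b)) ^ (-(2 * α'')) := by
    rw [← Real.rpow_add hB0, hsum]; ring_nf
  have e1 : (1 + (a + Real.sqrt b)) ^ (-(2 * α')) ≤ (1 + a) ^ (-(2 * α')) :=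
    Real.rpow_le_rpow_of_nonpos (by linarith) (by linarith) (by linarith)
  have e2 : (1 + (a + Real.sqrt b)) ^ (-(2 * α'')) ≤ (1 + b / t) ^ (-α'') := by
    have step1 : (1 + (a + Real.sqrt b)) ^ (-(2 * α'')) ≤ (1 + Real.sqrt b) ^ (-(2 * α'')) :=
      Real.rpow_le_rpow_of_nonpos (by linarith) (by linarith) (by linarith)
    have step2 : (1 + Real.sqrt b) ^ (-(2 * α'')) ≤ (Real.sqrt (1 + b)) ^ (-(2 * α'')) :=
      Real.rpow_le_rpow_of_nonpos (Real.sqrt_pos.2 (by linarith)) hsq (by linarith)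
    have step3 : (Real.sqrt (1 + b)) ^ (-(2 * α'')) = (1 + b) ^ (-α'') := by
      rw [Real.sqrt_eq_rpow, ← Real.rpow_mul (by linarith)]
      ring_nf
    have step4 : (1 + b) ^ (-α'') ≤ (1 + b / t) ^ (-α'') := by
      apply Real.rpow_le_rpow_of_nonpos (by linarith) _ (by linarith)
      have : b / t ≤ b := by
        rw [div_le_iff₀ ht0]; nlinarith
      linarith
    calc (1 + (a + Real.sqrt b)) ^ (-(2 * α'')) ≤ _ := step1
      _ ≤ _ := step2
      _ = _ := step3
      _ ≤ _ := step4
  have hA0 : (0 : ℝ) ≤ (1 + b / t) ^ (-(2 * r)) := by positivity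
  have hE1 : (0 : ℝ) ≤ (1 + a) ^ (-(2 * α')) := by positivity
  calc (1 + b / t) ^ (-(2 * r)) * (1 + (a + Real.sqrt b)) ^ (-(2 * α))
      = (1 + b / t) ^ (-(2 * r)) *
        ((1 + (a + Real.sqrt b)) ^ (-(2 * α')) * (1 + (a + Real.sqrt b)) ^ (-(2 * α''))) := by
        rw [hsplit]
    _ ≤ (1 + b / t) ^ (-(2 * r)) * ((1 + a) ^ (-(2 * α')) * (1 + b / t) ^ (-α'')) := by
        apply mul_le_mul_of_nonneg_left _ hA0
        exact mul_le_mul e1 e2 (by positivity) hE1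
    _ = (1 + a) ^ (-(2 * α')) * ((1 + b / t) ^ (-(2 * r)) * (1 + b / t) ^ (-α'')) := by ring
    _ = (1 + a) ^ (-(2 * α')) * (1 + b / t) ^ (-(2 * r + α'')) := by
        rw [← Real.rpow_add (by positivity : (0 : ℝ) < 1 + b / t)]
        ring_nf

theorem weighted_integral_bound_dist_one (d₁ d₂ : ℕ) (hd₁ : 1 ≤ d₁) (hd₂ : 1 ≤ d₂)
    (r α : ℝ) (hr0 : 0 ≤ r) (hr : r < d₂ / 2) (hα : 0 ≤ α)
    (hαr : (d₁ + 2 * d₂ : ℝ) / 2 < α + 2 * r) :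
    ∃ C : ℝ, ∀ y : EuclideanSpace ℝ (Fin d₁) × EuclideanSpace ℝ (Fin d₂),
      (∫ x : EuclideanSpace ℝ (Fin d₁) × EuclideanSpace ℝ (Fin d₂),
          (1 + ‖x.2 - y.2‖ / (1 + ‖y.1‖)) ^ (-(2 * r)) *
            (1 + (‖x.1 - y.1‖ + Real.sqrt ‖x.2 - y.2‖)) ^ (-(2 * α)))
        ≤ C * (1 + ‖y.1‖) ^ (d₂ : ℝ) := by
  have hd₁' : (1 : ℝ) ≤ d₁ := by exact_mod_cast hd₁
  have hd₂' : (1 : ℝ) ≤ d₂ := by exact_mod_cast hd₂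
  -- choose the splitting α = α' + α''
  set α' : ℝ := ((d₁ : ℝ) / 2 + (α - ((d₂ : ℝ) - 2 * r))) / 2 with hα'def
  have h1 : (d₁ : ℝ) / 2 < α' := by
    simp only [hα'def]; linarith
  have h2 : α' < α - ((d₂ : ℝ) - 2 * r) := by
    simp only [hα'def]; linarith
  have hα'0 : 0 ≤ α' := by linarith
  set α'' : ℝ := α - α' with hα''def
  have hβ : (d₂ : ℝ) < 2 * r + α'' := by simp only [hα''def]; linarith
  have hα''0 : 0 ≤ α'' := by
    have : (0 : ℝ) < (d₂ : ℝ) - 2 * r := by linarith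
    simp only [hα''def]; linarith
  have hi1 : Integrable (fun u : EuclideanSpace ℝ (Fin d₁) => (1 + ‖u‖) ^ (-(2 * α'))) := by
    apply integrable_one_add_norm
    rw [finrank_euclideanSpace_fin]; linarith
  have hi2 : Integrable
      (fun w : EuclideanSpace ℝ (Fin d₂) => (1 + ‖w‖) ^ (-(2 * r + α''))) := by
    apply integrable_one_add_norm
    rw [finrank_euclideanSpace_fin]; linarith
  set C₁ : ℝ := ∫ u : EuclideanSpace ℝ (Fin d₁), (1 + ‖u‖) ^ (-(2 * α')) with hC₁
  set C₂ : ℝ := ∫ w : EuclideanSpace ℝ (Fin d₂), (1 + ‖w‖) ^ (-(2 * r + α'')) with hC₂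
  refine ⟨C₁ * C₂, fun y => ?_⟩
  set t : ℝ := 1 + ‖y.1‖ with htdef
  have ht : 1 ≤ t := by
    simp only [htdef]; linarith [norm_nonneg y.1]
  have ht0 : 0 < t := by linarith
  have htinv : t⁻¹ ≠ 0 := inv_ne_zero (by linarith)
  set F : EuclideanSpace ℝ (Fin d₁) → ℝ :=
    fun u => (1 + ‖u - y.1‖) ^ (-(2 * α')) with hF
  set G : EuclideanSpace ℝ (Fin d₂) → ℝ :=
    fun v => (1 + ‖v - y.2‖ / t) ^ (-(2 * r + α'')) with hG
  have hGeq : G = fun v : EuclideanSpace ℝ (Fin d₂) =>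
      (1 + ‖t⁻¹ • (v - y.2)‖) ^ (-(2 * r + α'')) := by
    funext v
    simp only [hG]
    rw [norm_smul, Real.norm_eq_abs, abs_of_pos (by positivity), ← div_eq_inv_mul]
  have hFi : Integrable F := hi1.comp_sub_right y.1
  have hGi : Integrable G := by
    rw [hGeq]
    exact (((integrable_comp_smul_iff volume
      (fun w : EuclideanSpace ℝ (Fin d₂) => (1 + ‖w‖) ^ (-(2 * r + α''))) htinv).2
        hi2).comp_sub_right y.2)
  have hHi : Integrable (fun x : EuclideanSpace ℝ (Fin d₁) × EuclideanSpace ℝ (Fin d₂) =>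
      F x.1 * G x.2) := by
    have := hFi.mul_prod hGi
    rwa [← Measure.volume_eq_prod] at this
  have hmono : (∫ x : EuclideanSpace ℝ (Fin d₁) × EuclideanSpace ℝ (Fin d₂),
      (1 + ‖x.2 - y.2‖ / (1 + ‖y.1‖)) ^ (-(2 * r)) *
        (1 + (‖x.1 - y.1‖ + Real.sqrt ‖x.2 - y.2‖)) ^ (-(2 * α)))
      ≤ ∫ x : EuclideanSpace ℝ (Fin d₁) × EuclideanSpace ℝ (Fin d₂), F x.1 * G x.2 := by
    apply integral_mono_of_nonneg
    · exact ae_of_all _ fun x => by positivity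
    · exact hHi
    · refine ae_of_all _ fun x => ?_
      simp only [hF, hG, ← htdef]
      exact aux_pointwise_bound r α α' α'' t ‖x.1 - y.1‖ ‖x.2 - y.2‖ hr0 hα'0 hα''0
        (by simp only [hα''def]; ring) ht (norm_nonneg _) (norm_nonneg _)
  have hprod : (∫ x : EuclideanSpace ℝ (Fin d₁) × EuclideanSpace ℝ (Fin d₂),
      F x.1 * G x.2) = (∫ u, F u) * (∫ v, G v) := by
    rw [Measure.volume_eq_prod, integral_prod_mul]
  have hIF : (∫ u, F u) = C₁ := by
    simp only [hF]
    exact integral_sub_right_eq_self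
      (fun u : EuclideanSpace ℝ (Fin d₁) => (1 + ‖u‖) ^ (-(2 * α'))) y.1
  have hIG : (∫ v, G v) = t ^ (d₂ : ℝ) * C₂ := by
    rw [hGeq]
    rw [integral_sub_right_eq_self
      (fun v : EuclideanSpace ℝ (Fin d₂) => (1 + ‖t⁻¹ • v‖) ^ (-(2 * r + α''))) y.2]
    have h := Measure.integral_comp_smul (μ := (volume : Measure (EuclideanSpace ℝ (Fin d₂))))
      (fun w : EuclideanSpace ℝ (Fin d₂) => (1 + ‖w‖) ^ (-(2 * r + α''))) t⁻¹
    rw [h, finrank_euclideanSpace_fin, smul_eq_mul]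
    congr 1
    rw [inv_pow, inv_inv, abs_of_pos (by positivity), ← Real.rpow_natCast t d₂]
  calc (∫ x : EuclideanSpace ℝ (Fin d₁) × EuclideanSpace ℝ (Fin d₂),
      (1 + ‖x.2 - y.2‖ / (1 + ‖y.1‖)) ^ (-(2 * r)) *
        (1 + (‖x.1 - y.1‖ + Real.sqrt ‖x.2 - y.2‖)) ^ (-(2 * α)))
      ≤ ∫ x : EuclideanSpace ℝ (Fin d₁) × EuclideanSpace ℝ (Fin d₂), F x.1 * G x.2 := hmono
    _ = C₁ * (t ^ (d₂ : ℝ) * C₂) := by rw [hprod, hIF, hIG]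
    _ = C₁ * C₂ * (1 + ‖y.1‖) ^ (d₂ : ℝ) := by rw [← htdef]; ring
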